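/- Let X, X_1, ..., X_n be positive semidefinite matrices with X ⪯ X_1 + ... + X_n. Then for any integer t ≥ 1, tr(X^t) ≤ n^{t-1}(tr(X_1^t) + ... + tr(X_n^t)). -/

import Mathlib

open Matrix in
/-- Diagonal entries of a real PSD matrix are nonnegative. -/
lemma psd_diag_nonneg {m : ℕ} {A : Matrix (Fin m) (Fin m) ℝ} (hA : A.PosSemidef)
    (i : Fin m) : 0 ≤ A i i := by
  have := hA.dotProduct_mulVec_nonneg (Pi.single i 1)
  simpa [dotProduct, mulVec, Pi.single_apply, ite_mul, mul_ite,
    Finset.sum_ite_eq, Finset.sum_ite_eq'] using this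

open Matrix in
/-- Scalar power-mean inequality. -/
lemma scalar_pow_sum {n : ℕ} (c : Fin n → ℝ) (hc : ∀ k, 0 ≤ c k) (t : ℕ) (ht : 1 ≤ t) :
    (∑ k, c k) ^ t ≤ (n : ℝ) ^ (t - 1) * ∑ k, c k ^ t := by
  obtain ⟨s, rfl⟩ : ∃ s, t = s + 1 := ⟨t - 1, (Nat.succ_pred_eq_of_pos ht).symm⟩
  simp only [Nat.add_sub_cancel]
  rcases Nat.eq_zero_or_pos n with hn | hn
  · subst hn
    simp
  · have h := pow_sum_div_card_le_sum_pow (s := Finset.univ) (f := c)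
      (fun i _ => hc i) s
    have hcard : (Finset.univ : Finset (Fin n)).card = n := by simp
    rw [hcard] at h
    have hpos : (0:ℝ) < (n : ℝ) ^ s := by positivity
    calc (∑ k, c k) ^ (s + 1) = ((∑ k, c k) ^ (s + 1) / (n:ℝ) ^ s) * (n:ℝ) ^ s := by
          field_simp
      _ ≤ (∑ k, c k ^ (s + 1)) * (n:ℝ) ^ s := mul_le_mul_of_nonneg_right h hpos.le
      _ = (n : ℝ) ^ s * ∑ k, c k ^ (s + 1) := mul_comm _ _

open Matrix in
/-- conjugation by a unitary and powers -/
lemma conj_pow_eq {m : ℕ} (V D : Matrix (Fin m) (Fin m) ℝ)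
    (h1 : star V * V = 1) (h2 : V * star V = 1) (t : ℕ) :
    (V * D * star V) ^ t = V * D ^ t * star V := by
  induction t with
  | zero => simpa using h2.symm
  | succ s ih =>
      rw [pow_succ, ih]
      have e1 : V * D ^ s * star V * (V * D * star V)
          = V * D ^ s * (star V * V) * (D * star V) := by noncomm_ring
      rw [e1, h1, pow_succ]
      noncomm_ring

open Matrix in
/-- Key Jensen-type lemma: for a real PSD matrix `A` and a unitary `V`,
`((Vᴴ A V) i i) ^ t ≤ (Vᴴ (A^t) V) i i`. -/
lemma conj_diag_pow_le {m : ℕ} {A : Matrix (Fin m) (Fin m) ℝ} (hA : A.PosSemidef)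
    (V : Matrix (Fin m) (Fin m) ℝ) (h1 : star V * V = 1) (h2 : V * star V = 1)
    (i : Fin m) (t : ℕ) :
    ((star V * A * V) i i) ^ t ≤ (star V * A ^ t * V) i i := by
  classical
  set W : Matrix (Fin m) (Fin m) ℝ := (hA.1.eigenvectorUnitary : Matrix (Fin m) (Fin m) ℝ)
    with hW
  have hW1 : star W * W = 1 := Matrix.mem_unitaryGroup_iff'.mp hA.1.eigenvectorUnitary.2
  have hW2 : W * star W = 1 := Matrix.mem_unitaryGroup_iff.mp hA.1.eigenvectorUnitary.2
  set ev : Fin m → ℝ := hA.1.eigenvalues with hev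
  have hspec : A = W * Matrix.diagonal ev * star W := by
    have := hA.1.spectral_theorem
    simpa [hW, hev, Function.comp] using this
  have hApow : ∀ s : ℕ, A ^ s = W * Matrix.diagonal (fun j => ev j ^ s) * star W := by
    intro s
    rw [hspec, conj_pow_eq W _ hW1 hW2, Matrix.diagonal_pow]
    rfl
  -- the weight vector
  set Q : Matrix (Fin m) (Fin m) ℝ := star W * V with hQ
  have hQunit : star Q * Q = 1 := by
    rw [hQ, Matrix.star_mul, star_star]
    have e1 : star V * W * (star W * V) = star V * (W * star W) * V := by noncomm_ring
    rw [e1, hW2, mul_one, h1]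
  have hQcol : ∀ s : ℕ, (star V * A ^ s * V) i i = ∑ j, (Q j i) ^ 2 * ev j ^ s := by
    intro s
    rw [hApow s]
    have e1 : star V * (W * Matrix.diagonal (fun j => ev j ^ s) * star W) * V
        = star Q * (Matrix.diagonal (fun j => ev j ^ s) * Q) := by
      rw [hQ, Matrix.star_mul, star_star]; noncomm_ring
    rw [e1, Matrix.mul_apply]
    simp only [Matrix.star_apply, star_trivial, Matrix.diagonal_mul]
    exact Finset.sum_congr rfl fun j _ => by ring
  have hbase : (star V * A * V) i i = ∑ j, (Q j i) ^ 2 * ev j := by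
    have := hQcol 1
    simpa using this
  have hsum1 : ∑ j, (Q j i) ^ 2 = 1 := by
    have h := congrArg (fun M => M i i) hQunit
    simp only [Matrix.mul_apply, Matrix.one_apply_eq, Matrix.star_apply, star_trivial] at h
    calc ∑ j, (Q j i) ^ 2 = ∑ j, Q j i * Q j i := by simp [sq]
      _ = 1 := h
  -- Jensen
  have hjensen := (convexOn_pow (𝕜 := ℝ) t).map_sum_le
    (t := Finset.univ) (w := fun j => (Q j i) ^ 2) (p := ev)
    (fun j _ => sq_nonneg _) (by simpa using hsum1)
    (fun j _ => hA.eigenvalues_nonneg j)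
  rw [hbase, hQcol t]
  calc (∑ j, (Q j i) ^ 2 * ev j) ^ t
      = (∑ j, (Q j i) ^ 2 • ev j) ^ t := by simp [smul_eq_mul]
    _ ≤ ∑ j, (Q j i) ^ 2 • (ev j ^ t) := hjensen
    _ = ∑ j, (Q j i) ^ 2 * ev j ^ t := by simp [smul_eq_mul]

theorem trace_power_sum_bound
    {m n : ℕ} (X : Matrix (Fin m) (Fin m) ℝ)
    (Xs : Fin n → Matrix (Fin m) (Fin m) ℝ)
    (hX : X.PosSemidef) (hXs : ∀ i, (Xs i).PosSemidef)
    (hle : ((∑ i, Xs i) - X).PosSemidef)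
    (t : ℕ) (ht : 1 ≤ t) :
    (X ^ t).trace ≤ (n : ℝ) ^ (t - 1) * ∑ i, ((Xs i) ^ t).trace := by
  classical
  set V : Matrix (Fin m) (Fin m) ℝ := (hX.1.eigenvectorUnitary : Matrix (Fin m) (Fin m) ℝ)
    with hV
  have h1 : star V * V = 1 := Matrix.mem_unitaryGroup_iff'.mp hX.1.eigenvectorUnitary.2
  have h2 : V * star V = 1 := Matrix.mem_unitaryGroup_iff.mp hX.1.eigenvectorUnitary.2
  set ev : Fin m → ℝ := hX.1.eigenvalues with hev
  have hdiag : star V * X * V = Matrix.diagonal ev := by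
    have := hX.1.conjStarAlgAut_star_eigenvectorUnitary
    simpa [hV, hev, Function.comp, Unitary.conjStarAlgAut_star_apply] using this
  -- trace of X^t
  have htraceX : (X ^ t).trace = ∑ i, ev i ^ t := by
    have hXt : X ^ t = V * Matrix.diagonal (fun j => ev j ^ t) * star V := by
      have hspec : X = V * Matrix.diagonal ev * star V := by
        simpa [hV, hev, Function.comp] using hX.1.spectral_theorem
      rw [hspec, conj_pow_eq V _ h1 h2, Matrix.diagonal_pow]
      rfl
    rw [hXt, Matrix.trace_mul_cycle, h1, one_mul, Matrix.trace_diagonal]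
  -- diagonal entries
  set c : Fin n → Fin m → ℝ := fun k i => (star V * Xs k * V) i i with hc
  have hcnonneg : ∀ k i, 0 ≤ c k i := fun k i => by
    have := ((hXs k).conjTranspose_mul_mul_same V)
    simpa [Matrix.star_eq_conjTranspose, hc] using psd_diag_nonneg this i
  have hev_le : ∀ i, ev i ≤ ∑ k, c k i := by
    intro i
    have hpsd : (star V * ((∑ k, Xs k) - X) * V).PosSemidef := by
      rw [Matrix.star_eq_conjTranspose]; exact hle.conjTranspose_mul_mul_same V
    have hnn := psd_diag_nonneg hpsd i
    have hexp : star V * ((∑ k, Xs k) - X) * V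
        = (∑ k, star V * Xs k * V) - star V * X * V := by
      rw [Matrix.mul_sub, Matrix.sub_mul, Finset.mul_sum, Finset.sum_mul]
    rw [hexp] at hnn
    have hdi : ((∑ k, star V * Xs k * V) - star V * X * V) i i
        = (∑ k, c k i) - ev i := by
      simp [hc, hdiag, Matrix.sub_apply, Matrix.sum_apply, Matrix.diagonal_apply_eq]
    rw [hdi] at hnn
    linarith
  have hev_nonneg : ∀ i, 0 ≤ ev i := fun i => hX.eigenvalues_nonneg i
  -- trace of Xs k ^ t
  have htraceXs : ∀ k, ∑ i, (star V * (Xs k) ^ t * V) i i = ((Xs k) ^ t).trace := by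
    intro k
    have e1 : ∑ i, (star V * (Xs k) ^ t * V) i i = (star V * (Xs k) ^ t * V).trace := by
      simp [Matrix.trace, Matrix.diag]
    rw [e1, Matrix.trace_mul_cycle, h2, one_mul]
  calc (X ^ t).trace = ∑ i, ev i ^ t := htraceX
    _ ≤ ∑ i, (∑ k, c k i) ^ t := by
        apply Finset.sum_le_sum
        intro i _
        exact pow_le_pow_left₀ (hev_nonneg i) (hev_le i) t
    _ ≤ ∑ i, (n : ℝ) ^ (t - 1) * ∑ k, c k i ^ t := by
        apply Finset.sum_le_sum
        intro i _
        exact scalar_pow_sum (fun k => c k i) (fun k => hcnonneg k i) t ht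
    _ ≤ ∑ i, (n : ℝ) ^ (t - 1) * ∑ k, (star V * (Xs k) ^ t * V) i i := by
        apply Finset.sum_le_sum
        intro i _
        apply mul_le_mul_of_nonneg_left _ (by positivity)
        apply Finset.sum_le_sum
        intro k _
        exact conj_diag_pow_le (hXs k) V h1 h2 i t
    _ = (n : ℝ) ^ (t - 1) * ∑ k, ((Xs k) ^ t).trace := by
        rw [← Finset.mul_sum, Finset.sum_comm]
        congr 1
        exact Finset.sum_congr rfl fun k _ => htraceXs k
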